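/- Let q_i = 1 − (1−p)^i and a > 0. Then for all p ∈ (0,1/2) and 1 ≤ i ≤ ⌊a/p⌋, one has 1/q_i − 1/(ip) ≤ a/(2(1 − e^{−a})) + C(a)/i for some constant C(a) > 0 depending only on a; in particular 1/q_i − 1/(ip) is bounded uniformly by a constant depending only on a. -/
import Mathlib

open Real

lemma exp_neg_le_quad {s : ℝ} (hs : 0 ≤ s) : Real.exp (-s) ≤ 1 - s + s ^ 2 / 2 := by
  have h := Real.quadratic_le_exp_of_nonneg hs
  have hpos : (0:ℝ) < Real.exp s := Real.exp_pos s
  have hnn : (0:ℝ) ≤ 1 - s + s ^ 2 / 2 := by nlinarith [sq_nonneg (s - 1)]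
  rw [Real.exp_neg, inv_eq_one_div, div_le_iff₀ hpos]
  nlinarith [mul_le_mul_of_nonneg_left h hnn, sq_nonneg (s ^ 2)]

lemma core_bound (a s : ℝ) (ha : 0 < a) (hs0 : 0 < s) (hsa : s ≤ a) :
    1 / (1 - Real.exp (-s)) - 1 / s ≤ a / (2 * (1 - Real.exp (-a))) := by
  have hA : Real.exp (-a) < 1 := by rw [Real.exp_lt_one_iff]; linarith
  have hApos : (0:ℝ) < 1 - Real.exp (-a) := by linarith
  have hEs : Real.exp (-s) < 1 := by rw [Real.exp_lt_one_iff]; linarith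
  have hEpos : (0:ℝ) < 1 - Real.exp (-s) := by linarith
  have hquad := exp_neg_le_quad hs0.le
  have step2 : 1 / (1 - Real.exp (-s)) - 1 / s ≤ s / (2 * (1 - Real.exp (-s))) := by
    rw [div_sub_div _ _ hEpos.ne' hs0.ne', div_le_div_iff₀ (by positivity) (by positivity)]
    nlinarith [mul_le_mul_of_nonneg_right
      (show s - (1 - Real.exp (-s)) ≤ s ^ 2 / 2 by linarith)
      (show (0:ℝ) ≤ 2 * (1 - Real.exp (-s)) by linarith)]
  have ht1 : s / a ≤ 1 := by rw [div_le_one ha]; exact hsa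
  have ht0 : 0 ≤ s / a := by positivity
  have hconv : Real.exp (-s) ≤ (1 - s / a) * 1 + (s / a) * Real.exp (-a) := by
    have h := convexOn_exp.2 (Set.mem_univ (0:ℝ)) (Set.mem_univ (-a))
      (by linarith : (0:ℝ) ≤ 1 - s / a) ht0 (by ring : (1 - s / a) + s / a = 1)
    simp only [smul_eq_mul, mul_zero, zero_add, Real.exp_zero, mul_one] at h
    have hsa' : (s / a) * (-a) = -s := by field_simp
    rw [hsa'] at h
    linarith [h]
  have hconv' : a * Real.exp (-s) ≤ a - s + s * Real.exp (-a) := by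
    have := mul_le_mul_of_nonneg_left hconv ha.le
    have hfs : a * ((1 - s / a) * 1 + s / a * Real.exp (-a)) = a - s + s * Real.exp (-a) := by
      field_simp
    rw [hfs] at this; linarith
  have step3 : s / (2 * (1 - Real.exp (-s))) ≤ a / (2 * (1 - Real.exp (-a))) := by
    rw [div_le_div_iff₀ (by positivity) (by positivity)]
    nlinarith [hconv']
  linarith

theorem geometric_mean_comparison (a : ℝ) (ha : 0 < a) :
    ∃ C > (0:ℝ), ∃ D : ℝ, ∀ p ∈ Set.Ioo (0:ℝ) (1/2), ∀ i : ℕ,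
      1 ≤ i → i ≤ Nat.floor (a / p) →
        1 / (1 - (1 - p) ^ i) - 1 / (i * p)
          ≤ a / (2 * (1 - Real.exp (-a))) + C / i ∧
        1 / (1 - (1 - p) ^ i) - 1 / (i * p) ≤ D := by
  refine ⟨1, one_pos, a / (2 * (1 - Real.exp (-a))) + 1, ?_⟩
  intro p hp i hi1 hif
  obtain ⟨hp0, hp2⟩ := hp
  have hp1 : p < 1 := by linarith
  have hi0 : (0:ℝ) < i := by exact_mod_cast hi1
  have hs0 : (0:ℝ) < i * p := by positivity
  have hsa : (i:ℝ) * p ≤ a := by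
    have h : (i:ℝ) ≤ a / p := (Nat.le_floor_iff (by positivity)).mp hif
    calc (i:ℝ) * p ≤ (a / p) * p := by nlinarith
      _ = a := by field_simp
  have hpow_lt : (1 - p) ^ i < 1 := pow_lt_one₀ (by linarith) (by linarith) (by omega)
  have hq : 0 < 1 - (1 - p) ^ i := by linarith
  have hE : (1 - p) ^ i ≤ Real.exp (-(i * p)) := by
    have h1 : 1 - p ≤ Real.exp (-p) := by
      have := Real.add_one_le_exp (-p); linarith
    calc (1 - p) ^ i ≤ (Real.exp (-p)) ^ i := pow_le_pow_left₀ (by linarith) h1 i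
      _ = Real.exp (-(i * p)) := by rw [← Real.exp_nat_mul]; ring_nf
  have hEs : Real.exp (-(i * p)) < 1 := by rw [Real.exp_lt_one_iff]; linarith
  have hEpos : (0:ℝ) < 1 - Real.exp (-(i * p)) := by linarith
  have step1 : 1 / (1 - (1 - p) ^ i) ≤ 1 / (1 - Real.exp (-(i * p))) := by
    apply one_div_le_one_div_of_le hEpos; linarith
  have key : 1 / (1 - (1 - p) ^ i) - 1 / (i * p) ≤ a / (2 * (1 - Real.exp (-a))) := by
    have := core_bound a (i * p) ha hs0 hsa
    linarith
  have hCi : (0:ℝ) < 1 / i := by positivity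
  have hCi1 : (1:ℝ) / i ≤ 1 := by rw [div_le_one hi0]; exact_mod_cast hi1
  exact ⟨by linarith, by linarith⟩
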